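/- Let X be a real Banach space and P : X → ℝ a nonzero continuous 2-homogeneous polynomial. If P is identically zero on some infinite-dimensional linear subspace of X, then every P-maximal subspace of X is infinite-dimensional. -/

import Mathlib

lemma update_vec0 {X : Type*} (a b c : X) : Function.update ![a, b] 0 c = ![c, b] := by
  ext i; fin_cases i <;> simp
lemma update_vec1 {X : Type*} (a b c : X) : Function.update ![a, b] 1 c = ![a, c] := by
  ext i; fin_cases i <;> simp



/-- `P : X → ℝ` is an `n`-homogeneous polynomial: there is a symmetric `n`-linear form `A`
with `P x = A (x, …, x)`. -/
def IsHomogPoly {X : Type*} [NormedAddCommGroup X] [NormedSpace ℝ X]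
    (n : ℕ) (P : X → ℝ) : Prop :=
  ∃ A : MultilinearMap ℝ (fun _ : Fin n => X) ℝ,
    (∀ (σ : Equiv.Perm (Fin n)) (v : Fin n → X), (A fun i => v (σ i)) = A v) ∧
    ∀ x, P x = A fun _ => x

/-- `P` is a continuous `n`-homogeneous polynomial. -/
def IsContHomogPoly {X : Type*} [NormedAddCommGroup X] [NormedSpace ℝ X]
    (n : ℕ) (P : X → ℝ) : Prop :=
  IsHomogPoly n P ∧ ∃ C : ℝ, ∀ x, ‖P x‖ ≤ C * ‖x‖ ^ n

/-- `M` is a `P`-maximal subspace: a proper subspace on which `P` vanishes identically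
and which is maximal among subspaces on which `P` vanishes. -/
def IsPMaximal {X : Type*} [NormedAddCommGroup X] [NormedSpace ℝ X]
    (P : X → ℝ) (M : Submodule ℝ X) : Prop :=
  M ≠ ⊤ ∧ (∀ x ∈ M, P x = 0) ∧
    ∀ M₁ : Submodule ℝ X, M ≤ M₁ → (∀ x ∈ M₁, P x = 0) → M₁ = M

/-- If a nonzero continuous 2-homogeneous polynomial `P` on a real Banach space vanishes
identically on some infinite-dimensional subspace, then every `P`-maximal subspace is
infinite-dimensional. -/
theorem pMaximal_infiniteDim {X : Type*} [NormedAddCommGroup X] [NormedSpace ℝ X]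
    [CompleteSpace X] (P : X → ℝ) (hP : IsContHomogPoly 2 P) (hP0 : P ≠ 0)
    (hex : ∃ M : Submodule ℝ X, ¬ FiniteDimensional ℝ M ∧ ∀ x ∈ M, P x = 0) :
    ∀ N : Submodule ℝ X, IsPMaximal P N → ¬ FiniteDimensional ℝ N := by
  obtain ⟨⟨A, hsym, hPA⟩, -⟩ := hP
  obtain ⟨M, hMinf, hMP⟩ := hex
  intro N hNm hNfd
  obtain ⟨-, hNP, hNmax⟩ := hNm
  -- the bilinear form
  set b : X → X → ℝ := fun x y => A ![x, y] with hb
  have hadd0 : ∀ x x' y : X, b (x + x') y = b x y + b x' y := by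
    intro x x' y; simpa [hb, update_vec0] using A.map_update_add ![x, y] 0 x x'
  have hadd1 : ∀ x y y' : X, b x (y + y') = b x y + b x y' := by
    intro x y y'; simpa [hb, update_vec1] using A.map_update_add ![x, y] 1 y y'
  have hsmul0 : ∀ (c : ℝ) (x y : X), b (c • x) y = c * b x y := by
    intro c x y; simpa [hb, update_vec0] using A.map_update_smul ![x, y] 0 c x
  have hsmul1 : ∀ (c : ℝ) (x y : X), b x (c • y) = c * b x y := by
    intro c x y; simpa [hb, update_vec1] using A.map_update_smul ![x, y] 1 c y
  have hbsymm : ∀ x y : X, b x y = b y x := by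
    intro x y
    have := hsym (Equiv.swap 0 1) ![y, x]
    have h2 : (fun i => ![y, x] ((Equiv.swap 0 1) i)) = ![x, y] := by
      ext i; fin_cases i <;> simp
    rw [h2] at this
    simpa [hb] using this
  have hPb : ∀ x, P x = b x x := by
    intro x
    have h2 : (fun _ : Fin 2 => x) = ![x, x] := by ext i; fin_cases i <;> simp
    rw [hPA x, h2]
  -- the linear map f : X → (N →ₗ ℝ)
  let B : X →ₗ[ℝ] X →ₗ[ℝ] ℝ := LinearMap.mk₂ ℝ b hadd0 hsmul0 hadd1 hsmul1
  let f : X →ₗ[ℝ] (N →ₗ[ℝ] ℝ) :=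
    { toFun := fun x => (B x).comp N.subtype
      map_add' := fun x y => by ext n; simp
      map_smul' := fun c x => by ext n; simp }
  set M' : Submodule ℝ X := M ⊓ LinearMap.ker f with hM'
  have hM'b : ∀ x ∈ M', ∀ n ∈ N, b x n = 0 := by
    intro x hx n hn
    have hfx : f x = 0 := hx.2
    have := congrFun (congrArg DFunLike.coe hfx) ⟨n, hn⟩
    simpa [f, B] using this
  -- P vanishes on N ⊔ M'
  have hvanish : ∀ x ∈ N ⊔ M', P x = 0 := by
    intro x hx
    obtain ⟨n, hn, m, hm, rfl⟩ := Submodule.mem_sup.mp hx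
    have h1 : b n n = 0 := (hPb n) ▸ hNP n hn
    have h2 : b m m = 0 := (hPb m) ▸ hMP m hm.1
    have h3 : b m n = 0 := hM'b m hm n hn
    have h4 : b n m = 0 := (hbsymm n m).trans h3
    rw [hPb, hadd0, hadd1, hadd1, h1, h2, h3, h4]; ring
  have hsup : N ⊔ M' = N := hNmax _ le_sup_left hvanish
  have hM'N : M' ≤ N := le_sup_right.trans hsup.le
  have hM'fd : FiniteDimensional ℝ M' := Submodule.finiteDimensional_of_le hM'N
  -- now derive FiniteDimensional ℝ M, contradiction
  apply hMinf
  let g : M →ₗ[ℝ] (N →ₗ[ℝ] ℝ) := f.comp M.subtype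
  have hker : LinearMap.ker g = Submodule.comap M.subtype (LinearMap.ker f) := by
    rw [LinearMap.ker_comp]
  have hmap : Submodule.map M.subtype (LinearMap.ker g) = M' := by
    rw [hker, Submodule.map_comap_subtype]
  have hkerfd : FiniteDimensional ℝ (LinearMap.ker g) := by
    have e := Submodule.equivMapOfInjective M.subtype M.injective_subtype (LinearMap.ker g)
    rw [hmap] at e
    exact e.symm.finiteDimensional
  have hquotfd : FiniteDimensional ℝ (M ⧸ LinearMap.ker g) := by
    have : FiniteDimensional ℝ (N →ₗ[ℝ] ℝ) := inferInstance
    exact Module.Finite.equiv g.quotKerEquivRange.symm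
  have : IsNoetherian ℝ M :=
    (isNoetherian_iff_submodule_quotient (LinearMap.ker g)).mpr
      ⟨IsNoetherian.iff_fg.mpr hkerfd, IsNoetherian.iff_fg.mpr hquotfd⟩
  exact IsNoetherian.iff_fg.mp this
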